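/- Let ħ > 0 and m > 0 be constants, and let ρ, φ, V : ℝ × ℝ → ℝ be such that ρ(x,t) > 0 everywhere and ρ and φ are twice continuously differentiable. Suppose the continuity equation ∂_t ρ = −(ħ/m)·(∂_x ρ · ∂_x φ + ρ · ∂_x² φ) and the phase equation ħ·∂_t φ + (ħ²/(2m))·(∂_x φ)² + V − (ħ²/(2m))·(∂_x² √ρ)/√ρ = 0 hold at every (x,t). Then Ψ(x,t) = √(ρ(x,t)) · exp(i·φ(x,t)) satisfies the Schrödinger equation i·ħ·∂_t Ψ(x,t) = −(ħ²/(2m))·∂_x² Ψ(x,t) + V(x,t)·Ψ(x,t) for all (x,t). -/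

import Mathlib

open Complex

/-- The entropic-dynamics derivation of the Schrödinger equation (one spatial
dimension, osmotic mass equal to the current mass): if the density `ρ` and phase `φ`
satisfy the continuity (Fokker–Planck) equation and the phase equation, then
`Ψ = √ρ · exp(iφ)` satisfies `ihbar ∂_t Ψ = −(hbar²/2m) ∂_x² Ψ + V Ψ`.
Functions of two variables are curried, `F x t`, with `x` the spatial and `t` the
time variable; `∂_t F (x,t) = deriv (F x) t`, `∂_x F (x,t) = deriv (fun y => F y t) x`. -/
theorem eqd_schrodinger_equation
    (hbar m : ℝ) (hpos : 0 < hbar) (hm : 0 < m)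
    (ρ φ V : ℝ → ℝ → ℝ)
    (hρpos : ∀ x t, 0 < ρ x t)
    (hρ : ContDiff ℝ 2 (Function.uncurry ρ))
    (hφ : ContDiff ℝ 2 (Function.uncurry φ))
    (hFP : ∀ x t, deriv (fun s => ρ x s) t
        = -(hbar / m) * (deriv (fun y => ρ y t) x * deriv (fun y => φ y t) x
            + ρ x t * deriv (deriv (fun y => φ y t)) x))
    (hphase : ∀ x t, hbar * deriv (fun s => φ x s) t
        + (hbar ^ 2 / (2 * m)) * (deriv (fun y => φ y t) x) ^ 2 + V x t
        - (hbar ^ 2 / (2 * m))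
            * (deriv (deriv (fun y => Real.sqrt (ρ y t))) x / Real.sqrt (ρ x t)) = 0)
    (Ψ : ℝ → ℝ → ℂ)
    (hΨ : ∀ x t, Ψ x t = (Real.sqrt (ρ x t) : ℂ) * Complex.exp (Complex.I * (φ x t : ℝ))) :
    ∀ x t, Complex.I * (hbar : ℂ) * deriv (fun s => Ψ x s) t
        = -((hbar : ℂ) ^ 2 / (2 * (m : ℂ))) * deriv (deriv (fun y => Ψ y t)) x
          + (V x t : ℂ) * Ψ x t := by
  intro x t
  -- slice smoothness
  have hρx2 : ContDiff ℝ 2 fun y => ρ y t := hρ.comp (contDiff_id.prodMk contDiff_const)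
  have hρt2 : ContDiff ℝ 2 fun s => ρ x s := hρ.comp (contDiff_const.prodMk contDiff_id)
  have hφx2 : ContDiff ℝ 2 fun y => φ y t := hφ.comp (contDiff_id.prodMk contDiff_const)
  have hφt2 : ContDiff ℝ 2 fun s => φ x s := hφ.comp (contDiff_const.prodMk contDiff_id)
  have hρxd : Differentiable ℝ fun y => ρ y t := hρx2.differentiable two_ne_zero
  have hρtd : Differentiable ℝ fun s => ρ x s := hρt2.differentiable two_ne_zero
  have hφxd : Differentiable ℝ fun y => φ y t := hφx2.differentiable two_ne_zero
  have hφtd : Differentiable ℝ fun s => φ x s := hφt2.differentiable two_ne_zero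
  have deriv_diff : ∀ f : ℝ → ℝ, ContDiff ℝ 2 f → Differentiable ℝ (deriv f) := by
    intro f h
    have h2 : ContDiff ℝ ((1:WithTop ℕ∞) + 1) f := by norm_num; exact h
    exact (contDiff_succ_iff_deriv.mp h2).2.2.differentiable one_ne_zero
  have hρx' : Differentiable ℝ (deriv fun y => ρ y t) := deriv_diff _ hρx2
  have hφx' : Differentiable ℝ (deriv fun y => φ y t) := deriv_diff _ hφx2
  -- abbreviations
  set s0 : ℝ := Real.sqrt (ρ x t) with hs0
  have hs0pos : 0 < s0 := Real.sqrt_pos.mpr (hρpos x t)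
  have hs0ne : s0 ≠ 0 := hs0pos.ne'
  have hsq : s0 ^ 2 = ρ x t := Real.sq_sqrt (hρpos x t).le
  set fx : ℝ := deriv (fun y => φ y t) x with hfx
  set fxx : ℝ := deriv (deriv fun y => φ y t) x with hfxx
  set ft' : ℝ := deriv (fun s => φ x s) t with hft
  set rx : ℝ := deriv (fun y => ρ y t) x with hrx
  set rt' : ℝ := deriv (fun s => ρ x s) t with hrt
  set E : ℂ := Complex.exp (Complex.I * (φ x t : ℝ)) with hE
  -- derivative of sqrt ∘ ρ in x, as a function
  set R' : ℝ → ℝ := fun y => deriv (fun z => ρ z t) y / (2 * Real.sqrt (ρ y t)) with hR'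
  have hRd : ∀ y, HasDerivAt (fun z => Real.sqrt (ρ z t)) (R' y) y := fun y =>
    ((hρxd y).hasDerivAt).sqrt (hρpos y t).ne'
  have hRderiv : deriv (fun z => Real.sqrt (ρ z t)) = R' := funext fun y => (hRd y).deriv
  have hR'diff : DifferentiableAt ℝ R' x := by
    apply DifferentiableAt.div (hρx' x)
    · exact (differentiableAt_const 2).mul (hRd x).differentiableAt
    · positivity
  set Rxx : ℝ := deriv (deriv fun y => Real.sqrt (ρ y t)) x with hRxx
  have hRxx' : HasDerivAt R' Rxx x := by
    rw [hRxx, hRderiv]; exact hR'diff.hasDerivAt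
  -- first spatial derivative of Ψ
  set G : ℝ → ℂ := fun y =>
    ((R' y : ℂ) + Complex.I * (deriv (fun z => φ z t) y : ℝ) * (Real.sqrt (ρ y t) : ℝ))
      * Complex.exp (Complex.I * (φ y t : ℝ)) with hGdef
  have hexp : ∀ y, HasDerivAt (fun z => Complex.exp (Complex.I * (φ z t : ℝ)))
      (Complex.I * ((deriv (fun z => φ z t) y : ℝ) : ℂ)
        * Complex.exp (Complex.I * (φ y t : ℝ))) y := by
    intro y
    have h2 : HasDerivAt (fun z => ((φ z t : ℝ) : ℂ)) ((deriv (fun z => φ z t) y : ℝ) : ℂ) y :=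
      ((hφxd y).hasDerivAt).ofReal_comp
    have h3 := (h2.const_mul Complex.I).cexp
    convert h3 using 1
    ring
  have hG : ∀ y, HasDerivAt (fun z =>
      (Real.sqrt (ρ z t) : ℂ) * Complex.exp (Complex.I * (φ z t : ℝ))) (G y) y := by
    intro y
    have h1 : HasDerivAt (fun z => ((Real.sqrt (ρ z t) : ℝ) : ℂ)) (R' y) y :=
      (hRd y).ofReal_comp
    have := h1.mul (hexp y)
    convert this using 1 <;> try rfl
    rw [hGdef]
    ring
  have hΨx : (fun y => Ψ y t)
      = fun y => (Real.sqrt (ρ y t) : ℂ) * Complex.exp (Complex.I * (φ y t : ℝ)) :=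
    funext fun y => hΨ y t
  have hderiv1 : deriv (fun y => Ψ y t) = G := by
    rw [hΨx]; exact funext fun y => (hG y).deriv
  -- second spatial derivative
  set D : ℂ := ((Rxx : ℂ) + Complex.I * ((fxx : ℝ) : ℂ) * (s0 : ℂ)
        + Complex.I * (fx : ℂ) * (R' x : ℂ)) * E
      + ((R' x : ℂ) + Complex.I * (fx : ℂ) * (s0 : ℂ)) * (Complex.I * (fx : ℂ) * E) with hD
  have hGx : HasDerivAt G D x := by
    have h1 : HasDerivAt (fun y => ((R' y : ℝ) : ℂ)) (Rxx : ℝ) x := hRxx'.ofReal_comp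
    have h2 : HasDerivAt (fun y => ((deriv (fun z => φ z t) y : ℝ) : ℂ)) ((fxx : ℝ) : ℂ) x := by
      exact_mod_cast ((hφx' x).hasDerivAt).ofReal_comp
    have h3 : HasDerivAt (fun y => ((Real.sqrt (ρ y t) : ℝ) : ℂ)) (R' x) x :=
      (hRd x).ofReal_comp
    have hprod : HasDerivAt
        (fun y => Complex.I * ((deriv (fun z => φ z t) y : ℝ) : ℂ)
          * ((Real.sqrt (ρ y t) : ℝ) : ℂ))
        (Complex.I * ((fxx : ℝ) : ℂ) * (s0 : ℂ) + Complex.I * (fx : ℂ) * (R' x : ℂ)) x := by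
      have := (h2.const_mul Complex.I).mul h3
      convert this using 1 <;> try rfl
      all_goals push_cast; ring
    have hsum := h1.add hprod
    have := hsum.mul (hexp x)
    convert this using 1 <;> try rfl
    all_goals rw [hD]; simp only [Pi.add_apply]; push_cast; ring
  have hderiv2 : deriv (deriv fun y => Ψ y t) x = D := by
    rw [hderiv1]; exact hGx.deriv
  -- time derivative
  have hΨt : (fun s => Ψ x s)
      = fun s => (Real.sqrt (ρ x s) : ℂ) * Complex.exp (Complex.I * (φ x s : ℝ)) :=
    funext fun s => hΨ x s
  set Dt : ℂ := ((rt' / (2 * s0) : ℝ) : ℂ) * E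
      + (s0 : ℂ) * (Complex.I * (ft' : ℂ) * E) with hDt
  have hderivt : deriv (fun s => Ψ x s) t = Dt := by
    rw [hΨt]
    have h1 : HasDerivAt (fun s => ((Real.sqrt (ρ x s) : ℝ) : ℂ)) ((rt' / (2 * s0) : ℝ) : ℂ) t :=
      (((hρtd t).hasDerivAt).sqrt (hρpos x t).ne').ofReal_comp
    have h2 : HasDerivAt (fun s => ((φ x s : ℝ) : ℂ)) ((ft' : ℝ) : ℂ) t :=
      ((hφtd t).hasDerivAt).ofReal_comp
    have h3 := (h2.const_mul Complex.I).cexp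
    have := h1.mul h3
    apply HasDerivAt.deriv
    convert this using 1 <;> try rfl
    rw [hDt]
    ring
  -- now algebra
  rw [hderivt, hderiv2, hΨ x t]
  rw [hDt, hD]
  have hR'x : R' x = rx / (2 * s0) := rfl
  rw [hR'x]
  -- real-valued key identities
  have key1r : hbar * (rt' / (2 * s0)) + (hbar ^ 2 / (2 * m)) * (rx * fx / s0 + s0 * fxx) = 0 := by
    have h := hFP x t
    rw [← hrt, ← hrx, ← hfx, ← hfxx, ← hsq] at h
    rw [h]
    field_simp
    ring
  have key2r : hbar * ft' * s0 + (hbar ^ 2 / (2 * m)) * fx ^ 2 * s0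
      - (hbar ^ 2 / (2 * m)) * Rxx + V x t * s0 = 0 := by
    have h := hphase x t
    rw [← hft, ← hfx, ← hRxx, ← hs0] at h
    have hcancel : Rxx / s0 * s0 = Rxx := div_mul_cancel₀ _ hs0ne
    linear_combination s0 * h + (hbar ^ 2 / (2 * m)) * hcancel
  have key1 : (hbar : ℂ) * ((rt' : ℂ) / (2 * (s0 : ℂ)))
      + ((hbar : ℂ) ^ 2 / (2 * (m : ℂ))) * ((rx : ℂ) * fx / s0 + (s0 : ℂ) * fxx) = 0 := by
    exact_mod_cast key1r
  have key2 : (hbar : ℂ) * (ft' : ℂ) * s0 + ((hbar : ℂ) ^ 2 / (2 * (m : ℂ))) * (fx : ℂ) ^ 2 * s0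
      - ((hbar : ℂ) ^ 2 / (2 * (m : ℂ))) * (Rxx : ℂ) + (V x t : ℂ) * s0 = 0 := by
    exact_mod_cast key2r
  push_cast
  linear_combination (Complex.I * E) * key1 + (Complex.I ^ 2 * E) * key2
    + ((((hbar : ℂ) ^ 2 / (2 * (m : ℂ))) * (Rxx : ℂ) - (V x t : ℂ) * (s0 : ℂ)) * E) * Complex.I_sq
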